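/- arXiv:1612.02799 — 5 statements merged into one kernel-verified Lean document; each statement's English description precedes it below -/
import Mathlib

section
/- Let s, z ∈ ℂ with s ≠ 0, z ≠ 2, and s² + s^{-2} ≠ z. Let m be an integer and suppose that (s² + s^{-2} + 2 − z)·(S_m(z)² + S_{m-1}(z)²) − 2·(s² + s^{-2})·S_m(z)·S_{m-1}(z) = z. Then S_m(z)² + S_{m-1}(z)² = (z² − 2(s² + s^{-2}))/((z − 2)(s² + s^{-2} − z)). -/
theorem stmt6 (s z : ℂ) (hs : s ≠ 0) (hz : z ≠ 2)
    (hsz : s ^ (2 : ℤ) + s ^ (-2 : ℤ) ≠ z)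
    (S : ℤ → ℂ) (hS0 : S 0 = 1) (hS1 : S 1 = z)
    (hrec : ∀ j : ℤ, S j = z * S (j - 1) - S (j - 2))
    (m : ℤ)
    (heq : (s ^ (2 : ℤ) + s ^ (-2 : ℤ) + 2 - z) * ((S m) ^ 2 + (S (m - 1)) ^ 2)
      - 2 * (s ^ (2 : ℤ) + s ^ (-2 : ℤ)) * S m * S (m - 1) = z) :
    (S m) ^ 2 + (S (m - 1)) ^ 2
      = (z ^ 2 - 2 * (s ^ (2 : ℤ) + s ^ (-2 : ℤ)))
        / ((z - 2) * (s ^ (2 : ℤ) + s ^ (-2 : ℤ) - z)) := by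
  have key : ∀ j : ℤ, S j ^ 2 + S (j - 1) ^ 2 - z * S j * S (j - 1) = 1 := by
    intro j
    induction j using Int.induction_on with
    | zero =>
        have h1 := hrec 1
        norm_num at h1
        have hm1 : S (-1) = 0 := by
          rw [hS1, hS0] at h1; linear_combination h1
        norm_num [hm1, hS0]
    | succ n ih =>
        have h := hrec ((n : ℤ) + 1)
        have e1 : ((n : ℤ) + 1) - 1 = n := by ring
        have e2 : ((n : ℤ) + 1) - 2 = n - 1 := by ring
        rw [e1, e2] at h
        rw [e1]
        linear_combination ih + (S ((n:ℤ)+1) - S ((n:ℤ)-1)) * h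
    | pred n ih =>
        have h := hrec (-(n : ℤ))
        have e1 : (-(n : ℤ)) - 1 = -n - 1 := by ring
        have e2 : (-(n : ℤ)) - 2 = (-n - 1) - 1 := by ring
        have e3 : (-(n : ℤ) - 1) - 1 = -n - 2 := by ring
        rw [e1, e2, e3] at h
        rw [e3]
        linear_combination ih + (S (-(n:ℤ)-2) - S (-(n:ℤ))) * h
  have hkey := key m
  set w := s ^ (2 : ℤ) + s ^ (-2 : ℤ) with hw
  have h2 : z - 2 ≠ 0 := sub_ne_zero.mpr hz
  have h3 : w - z ≠ 0 := sub_ne_zero.mpr hsz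
  field_simp
  linear_combination z * heq - 2 * w * hkey
end

section
/- Let s, z ∈ ℂ with s ≠ 0, z ≠ 2, and s² + s^{-2} ≠ z. Let m be an integer and suppose (s² + s^{-2} + 2 − z)·(S_m(z)² + S_{m-1}(z)²) − 2·(s² + s^{-2})·S_m(z)·S_{m-1}(z) = z. Then (S_m(z) − S_{m-1}(z))² = (z − 2)/(s² + s^{-2} − z). -/
theorem stmt7 (s z : ℂ) (hs : s ≠ 0) (hz : z ≠ 2)
    (hsz : s ^ (2 : ℤ) + s ^ (-2 : ℤ) ≠ z)
    (S : ℤ → ℂ) (hS0 : S 0 = 1) (hS1 : S 1 = z)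
    (hrec : ∀ j : ℤ, S j = z * S (j - 1) - S (j - 2))
    (m : ℤ)
    (heq : (s ^ (2 : ℤ) + s ^ (-2 : ℤ) + 2 - z) * ((S m) ^ 2 + (S (m - 1)) ^ 2)
      - 2 * (s ^ (2 : ℤ) + s ^ (-2 : ℤ)) * S m * S (m - 1) = z) :
    (S m - S (m - 1)) ^ 2 = (z - 2) / (s ^ (2 : ℤ) + s ^ (-2 : ℤ) - z) := by
  have hm1 : S (-1) = 0 := by
    have h := hrec 1
    rw [hS1] at h
    norm_num at h
    rw [hS0] at h
    linear_combination h
  have hinv : ∀ j : ℤ, S j ^ 2 + S (j - 1) ^ 2 - z * S j * S (j - 1) = 1 := by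
    intro j
    induction j using Int.induction_on with
    | zero =>
      norm_num [hS0, hm1]
    | succ i ih =>
      have h := hrec (i + 1)
      have e1 : (i : ℤ) + 1 - 1 = i := by ring
      have e2 : (i : ℤ) + 1 - 2 = i - 1 := by ring
      rw [e1, e2] at h
      rw [e1, h]
      linear_combination ih
    | pred i ih =>
      have h := hrec (-i)
      have e1 : (-(i : ℤ)) - 1 = -i - 1 := by ring
      have e2 : (-(i : ℤ)) - 2 = -i - 1 - 1 := by ring
      rw [e1, e2] at h
      have h2 : S (-i - 1 - 1) = z * S (-i - 1) - S (-i) := by linear_combination h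
      rw [h2]
      have e3 : (-(i : ℤ)) - 1 = -i - 1 := by ring
      rw [e3] at ih ⊢
      linear_combination ih
  have h1 := hinv m
  have hden : s ^ (2 : ℤ) + s ^ (-2 : ℤ) - z ≠ 0 := sub_ne_zero.mpr hsz
  rw [eq_div_iff hden]
  linear_combination heq - 2 * h1
end

section
/- Let s, z ∈ ℂ with s ≠ 0, z ≠ 2, and s² + s^{-2} ≠ z. Let m be an integer and suppose (s² + s^{-2} + 2 − z)·(S_m(z)² + S_{m-1}(z)²) − 2·(s² + s^{-2})·S_m(z)·S_{m-1}(z) = z. Then (S_m(z) − s²·S_{m-1}(z))·(S_m(z) − s^{-2}·S_{m-1}(z)) = (s² + s^{-2} − z)/(z − 2). -/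
theorem stmt8 (s z : ℂ) (hs : s ≠ 0) (hz : z ≠ 2)
    (hsz : s ^ (2 : ℤ) + s ^ (-2 : ℤ) ≠ z)
    (S : ℤ → ℂ) (hS0 : S 0 = 1) (hS1 : S 1 = z)
    (hrec : ∀ j : ℤ, S j = z * S (j - 1) - S (j - 2))
    (m : ℤ)
    (heq : (s ^ (2 : ℤ) + s ^ (-2 : ℤ) + 2 - z) * ((S m) ^ 2 + (S (m - 1)) ^ 2)
      - 2 * (s ^ (2 : ℤ) + s ^ (-2 : ℤ)) * S m * S (m - 1) = z) :
    (S m - s ^ (2 : ℤ) * S (m - 1)) * (S m - s ^ (-2 : ℤ) * S (m - 1))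
      = (s ^ (2 : ℤ) + s ^ (-2 : ℤ) - z) / (z - 2) := by
  have inv : ∀ k : ℤ, S k ^ 2 + S (k - 1) ^ 2 - z * S k * S (k - 1) = 1 := by
    intro k
    induction k using Int.induction_on with
    | zero =>
      have h1 := hrec 1
      norm_num at h1
      rw [hS1] at h1
      have hm1 : S (-1) = 0 := by linear_combination h1 + z * hS0
      simp only [zero_sub]
      rw [hS0, hm1]; ring
    | succ k ih =>
      have h := hrec (k + 1)
      rw [show ((k : ℤ) + 1 - 1) = k by ring, show ((k : ℤ) + 1 - 2) = k - 1 by ring] at h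
      rw [show ((k : ℤ) + 1 - 1) = k by ring, h]
      linear_combination ih
    | pred k ih =>
      have h := hrec (-k)
      rw [show (-(k : ℤ) - 2) = (-(k : ℤ) - 1 - 1) by ring] at h
      rw [h] at ih
      linear_combination ih
  have h1 := inv m
  have hpq : s ^ (2 : ℤ) * s ^ (-2 : ℤ) = 1 := by
    rw [← zpow_add₀ hs]; norm_num
  have hz2 : z - 2 ≠ 0 := sub_ne_zero.mpr hz
  rw [eq_div_iff hz2]
  linear_combination (-1) * heq + (s ^ (2 : ℤ) + s ^ (-2 : ℤ)) * h1
    + (z - 2) * S (m - 1) ^ 2 * hpq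
end

section
/- Let s, z ∈ ℂ with s ≠ 0, z ≠ 2, and s² + s^{-2} ≠ z. Let m be an integer and suppose (s² + s^{-2} + 2 − z)·(S_m(z)² + S_{m-1}(z)²) − 2·(s² + s^{-2})·S_m(z)·S_{m-1}(z) = z. Then (S_m(z) − S_{m-1}(z))²·(S_m(z) − s²·S_{m-1}(z))·(S_m(z) − s^{-2}·S_{m-1}(z)) = 1. -/
theorem stmt9 (s z : ℂ) (hs : s ≠ 0) (hz : z ≠ 2)
    (hsz : s ^ (2 : ℤ) + s ^ (-2 : ℤ) ≠ z)
    (S : ℤ → ℂ) (hS0 : S 0 = 1) (hS1 : S 1 = z)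
    (hrec : ∀ j : ℤ, S j = z * S (j - 1) - S (j - 2))
    (m : ℤ)
    (heq : (s ^ (2 : ℤ) + s ^ (-2 : ℤ) + 2 - z) * ((S m) ^ 2 + (S (m - 1)) ^ 2)
      - 2 * (s ^ (2 : ℤ) + s ^ (-2 : ℤ)) * S m * S (m - 1) = z) :
    (S m - S (m - 1)) ^ 2 * (S m - s ^ (2 : ℤ) * S (m - 1))
      * (S m - s ^ (-2 : ℤ) * S (m - 1)) = 1 := by
  have hSm1 : S (-1) = 0 := by
    have h := hrec 1
    norm_num at h
    rw [hS0, hS1] at h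
    linear_combination h
  -- the Chebyshev invariant
  have hI : ∀ n : ℤ, S n ^ 2 + S (n - 1) ^ 2 - z * S n * S (n - 1) = 1 := by
    intro n
    induction n using Int.induction_on with
    | zero => norm_num [hS0, hSm1]
    | succ k ih =>
      have h := hrec ((k : ℤ) + 1)
      have e1 : ((k : ℤ) + 1) - 1 = k := by ring
      have e2 : ((k : ℤ) + 1) - 2 = k - 1 := by ring
      rw [e1, e2] at h
      rw [e1, h]
      linear_combination ih
    | pred k ih =>
      have h := hrec (-(k : ℤ))
      have e2 : (-(k : ℤ)) - 2 = (-k - 1) - 1 := by ring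
      rw [e2] at h
      have h' : S ((-(k : ℤ) - 1) - 1) = z * S (-k - 1) - S (-k) := by
        linear_combination h
      rw [h']
      linear_combination ih
  have hIm := hI m
  have h2 : s ^ (2 : ℤ) = s ^ 2 := by
    rw [show (2 : ℤ) = ((2 : ℕ) : ℤ) from rfl, zpow_natCast]
  have hneg : s ^ (-2 : ℤ) = (s ^ 2)⁻¹ := by
    rw [zpow_neg, h2]
  rw [h2, hneg] at heq ⊢
  set a := S m
  set b := S (m - 1)
  have hs2 : s ^ 2 ≠ 0 := pow_ne_zero _ hs
  -- key: (z-2)(z-w) * ab = w + 2 - 2z where w = s^2 + (s^2)⁻¹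
  have hQ : (z - 2) * (z - (s ^ 2 + (s ^ 2)⁻¹)) * (a * b)
      = (s ^ 2 + (s ^ 2)⁻¹) + 2 - 2 * z := by
    linear_combination ((s ^ 2 + (s ^ 2)⁻¹) + 2 - z) * hIm - heq
  linear_combination (norm := (field_simp; ring))
    (a * b) * hQ
      + (a ^ 2 + b ^ 2 + (z - (s ^ 2 + (s ^ 2)⁻¹) - 2) * (a * b) + 1) * hIm
end

section
/- Let s, z ∈ ℂ with s ≠ 0, z ≠ 2, s² + s^{-2} ≠ z, and S_m(z) ≠ s²·S_{m-1}(z). Let m be an integer and suppose (s² + s^{-2} + 2 − z)·(S_m(z)² + S_{m-1}(z)²) − 2·(s² + s^{-2})·S_m(z)·S_{m-1}(z) = z. Setting w = (S_m(z) − S_{m-1}(z))·(S_m(z) − s^{-2}·S_{m-1}(z)), one has w² = (S_m(z) − s^{-2}·S_{m-1}(z))/(S_m(z) − s²·S_{m-1}(z)). -/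
theorem stmt10 (s z : ℂ) (hs : s ≠ 0) (hz : z ≠ 2)
    (hsz : s ^ (2 : ℤ) + s ^ (-2 : ℤ) ≠ z)
    (S : ℤ → ℂ) (hS0 : S 0 = 1) (hS1 : S 1 = z)
    (hrec : ∀ j : ℤ, S j = z * S (j - 1) - S (j - 2))
    (m : ℤ)
    (hne : S m ≠ s ^ (2 : ℤ) * S (m - 1))
    (heq : (s ^ (2 : ℤ) + s ^ (-2 : ℤ) + 2 - z) * ((S m) ^ 2 + (S (m - 1)) ^ 2)
      - 2 * (s ^ (2 : ℤ) + s ^ (-2 : ℤ)) * S m * S (m - 1) = z)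
    (w : ℂ) (hw : w = (S m - S (m - 1)) * (S m - s ^ (-2 : ℤ) * S (m - 1))) :
    w ^ 2 = (S m - s ^ (-2 : ℤ) * S (m - 1)) / (S m - s ^ (2 : ℤ) * S (m - 1)) := by
  have hSm1 : S (-1) = 0 := by
    have h := hrec 1
    norm_num at h
    rw [hS0, hS1] at h
    linear_combination h
  -- invariant
  have hinv : ∀ j : ℤ, S j ^ 2 + S (j - 1) ^ 2 - z * S j * S (j - 1) = 1 := by
    intro j
    induction j using Int.induction_on with
    | zero => norm_num [hS0, hSm1]
    | succ k ih =>
      have h := hrec (k + 1)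
      have e1 : (k : ℤ) + 1 - 1 = k := by ring
      have e2 : (k : ℤ) + 1 - 2 = k - 1 := by ring
      rw [e1, e2] at h
      rw [e1, h]
      linear_combination ih
    | pred k ih =>
      have h := hrec (-(k : ℤ))
      have e1 : -(k : ℤ) - 1 = -(k + 1 : ℤ) := by push_cast; ring
      have e2 : -(k : ℤ) - 2 = -(k + 1 : ℤ) - 1 := by push_cast; ring
      rw [e1, e2] at h
      -- h : S (-k) = z * S (-(k+1)) - S (-(k+1) - 1)
      have hc : S (-(k + 1 : ℤ) - 1) = z * S (-(k + 1 : ℤ)) - S (-(k : ℤ)) := by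
        linear_combination h
      rw [e1] at ih
      rw [e1, hc]
      linear_combination ih
  have hI := hinv m
  set a := S m with ha
  set b := S (m - 1) with hb
  have hs2 : s ^ (2 : ℤ) = s ^ 2 := by norm_cast
  have hsn2 : s ^ (-2 : ℤ) = (s ^ 2)⁻¹ := by
    rw [zpow_neg, hs2]
  have hs2ne : s ^ 2 ≠ 0 := pow_ne_zero 2 hs
  simp only [hs2, hsn2] at heq hw hne ⊢
  have hden : a - s ^ 2 * b ≠ 0 := sub_ne_zero_of_ne hne
  have hv : (s ^ 2)⁻¹ * s ^ 2 = 1 := inv_mul_cancel₀ hs2ne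
  have key : (a - b) ^ 2 * (a - (s ^ 2)⁻¹ * b) * (a - s ^ 2 * b) = 1 := by
    linear_combination (-(a * b)) * heq + (a ^ 2 + b ^ 2 + 1) * hI +
      (a - b) ^ 2 * b ^ 2 * hv
  rw [hw, eq_div_iff hden]
  linear_combination (a - (s ^ 2)⁻¹ * b) * key
end
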